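/- Let s be a nonempty finite multiset of natural numbers each of which is at least 3, and suppose that ∑_{p ∈ s} (1/2 − 1/p) = 1 (as rational numbers). Then s is exactly one of the following 17 multisets: {3,3,3,3,3,3}, {3,3,3,4,4}, {3,3,3,3,6}, {3,3,4,12}, {3,3,6,6}, {3,4,4,6}, {4,4,4,4}, {3,12,12}, {4,8,8}, {4,6,12}, {6,6,6}, {5,5,10}, {3,8,24}, {3,9,18}, {3,10,15}, {4,5,20}, {3,7,42}. Conversely, each of these 17 multisets satisfies ∑_{p ∈ s} (1/2 − 1/p) = 1. -/

import Mathlib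

set_option maxHeartbeats 1000000

private lemma term_mono (q p : ℕ) (hq : 0 < q) (h : q ≤ p) :
    (1:ℚ)/2 - 1/(q:ℚ) ≤ (1:ℚ)/2 - 1/(p:ℚ) := by
  have hq' : (0:ℚ) < (q:ℚ) := by exact_mod_cast hq
  have h' : (q:ℚ) ≤ (p:ℚ) := by exact_mod_cast h
  have := one_div_le_one_div_of_le hq' h'
  linarith

private lemma sum_conv (s : Multiset ℕ) :
    (s.map (fun p => (1 : ℚ) / 2 - 1 / (p : ℚ))).sum
      = (Multiset.map (fun p : ℕ => (1:ℚ)/2 - 1/(p:ℚ)) s).sum := by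
  simp only [bind_pure_comp, Multiset.fmap_def, Multiset.map_map]
  rfl

private lemma sum_lb : ∀ l : List ℕ, (∀ p ∈ l, 3 ≤ p) →
    (l.length : ℚ)/6 ≤ (l.map (fun p : ℕ => (1:ℚ)/2 - 1/(p:ℚ))).sum := by
  intro l
  induction l with
  | nil => intro _; simp
  | cons a l ih =>
    intro h
    have ha := h a List.mem_cons_self
    have h1 : (1:ℚ)/6 ≤ (1:ℚ)/2 - 1/(a:ℚ) := by
      have := term_mono 3 a (by norm_num) ha
      norm_num at this ⊢
      linarith
    have h2 := ih (fun p hp => h p (List.mem_cons_of_mem a hp))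
    simp only [List.map_cons, List.sum_cons, List.length_cons]
    push_cast
    linarith

/-- A nonempty finite multiset `s` of natural numbers, each at least 3, satisfies
`∑_{p ∈ s} (1/2 − 1/p) = 1` (in ℚ) iff it is exactly one of the 17 listed multisets. -/
theorem curvature_zero_multiset_classification
    (s : Multiset ℕ) (hne : s ≠ 0) (h3 : ∀ p ∈ s, 3 ≤ p) :
    (s.map (fun p => (1 : ℚ) / 2 - 1 / (p : ℚ))).sum = 1 ↔
      (s = ({3, 3, 3, 3, 3, 3} : Multiset ℕ) ∨
        s = ({3, 3, 3, 4, 4} : Multiset ℕ) ∨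
        s = ({3, 3, 3, 3, 6} : Multiset ℕ) ∨
        s = ({3, 3, 4, 12} : Multiset ℕ) ∨
        s = ({3, 3, 6, 6} : Multiset ℕ) ∨
        s = ({3, 4, 4, 6} : Multiset ℕ) ∨
        s = ({4, 4, 4, 4} : Multiset ℕ) ∨
        s = ({3, 12, 12} : Multiset ℕ) ∨
        s = ({4, 8, 8} : Multiset ℕ) ∨
        s = ({4, 6, 12} : Multiset ℕ) ∨
        s = ({6, 6, 6} : Multiset ℕ) ∨
        s = ({5, 5, 10} : Multiset ℕ) ∨
        s = ({3, 8, 24} : Multiset ℕ) ∨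
        s = ({3, 9, 18} : Multiset ℕ) ∨
        s = ({3, 10, 15} : Multiset ℕ) ∨
        s = ({4, 5, 20} : Multiset ℕ) ∨
        s = ({3, 7, 42} : Multiset ℕ)) := by
  obtain ⟨l, rfl, hsort⟩ : ∃ l : List ℕ, (↑l : Multiset ℕ) = s ∧ l.Pairwise (·≤·) :=
    ⟨s.sort (·≤·), Multiset.sort_eq _ _, Multiset.pairwise_sort _ _⟩
  constructor
  · intro hsum
    rw [sum_conv, Multiset.map_coe, Multiset.sum_coe] at hsum
    have h3' : ∀ p ∈ l, 3 ≤ p := fun p hp => h3 p (Multiset.mem_coe.mpr hp)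
    have hlb := sum_lb l h3'
    have hlen : l.length ≤ 6 := by
      by_contra hc
      have h7 : (7:ℚ) ≤ (l.length : ℚ) := by exact_mod_cast (by omega : 7 ≤ l.length)
      linarith
    rcases l with _|⟨a,_|⟨b,_|⟨c,_|⟨d,_|⟨e,_|⟨g,_|⟨x,t⟩⟩⟩⟩⟩⟩⟩
    -- length 0
    · norm_num at hsum
    -- length 1
    · have ha := h3' a (by simp)
      have ha' : (0:ℚ) < (a:ℚ) := by exact_mod_cast (by omega : 0 < a)
      have : (0:ℚ) < 1/(a:ℚ) := by positivity
      simp only [List.map_cons, List.map_nil, List.sum_cons, List.sum_nil, add_zero] at hsum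
      linarith
    -- length 2
    · have ha := h3' a (by simp)
      have hb := h3' b (by simp)
      have ha' : (0:ℚ) < (a:ℚ) := by exact_mod_cast (by omega : 0 < a)
      have hb' : (0:ℚ) < (b:ℚ) := by exact_mod_cast (by omega : 0 < b)
      have h1 : (0:ℚ) < 1/(a:ℚ) := by positivity
      have h2 : (0:ℚ) < 1/(b:ℚ) := by positivity
      simp only [List.map_cons, List.map_nil, List.sum_cons, List.sum_nil, add_zero] at hsum
      linarith
    -- length 3
    · simp only [List.pairwise_cons, List.mem_cons, List.not_mem_nil, or_false,
        List.mem_singleton, forall_eq_or_imp, forall_eq, List.Pairwise.nil, and_true] at hsort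
      obtain ⟨⟨hab, -⟩, hbc, -⟩ := hsort
      have ha := h3' a (by simp)
      simp only [List.map_cons, List.map_nil, List.sum_cons, List.sum_nil, add_zero] at hsum
      have ha0 : (a:ℚ) ≠ 0 := Nat.cast_ne_zero.mpr (by omega)
      have hb0 : (b:ℚ) ≠ 0 := Nat.cast_ne_zero.mpr (by omega)
      have hc0 : (c:ℚ) ≠ 0 := Nat.cast_ne_zero.mpr (by omega)
      have key : 2*(b*c + a*c + a*b) = a*b*c := by
        have hq : 2*((b:ℚ)*c + a*c + a*b) = a*b*c := by
          field_simp at hsum; linarith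
        exact_mod_cast hq
      have ha6 : a ≤ 6 := by
        by_contra hcon
        have l1 := term_mono 7 a (by norm_num) (by omega)
        have l2 := term_mono 7 b (by norm_num) (by omega)
        have l3 := term_mono 7 c (by norm_num) (by omega)
        norm_num [one_div] at l1 l2 l3 hsum
        linarith
      have hc1 : 1 ≤ c := by omega
      have hA : a = 3 ∨ a = 4 ∨ a = 5 ∨ a = 6 := by omega
      rcases hA with rfl|rfl|rfl|rfl
      · have hb12 : b ≤ 12 := by
          by_contra hcon
          have := Nat.mul_le_mul_right c (show 13 ≤ b by omega)
          linarith
        have hsub : b=12∧c=12 ∨ b=8∧c=24 ∨ b=9∧c=18 ∨ b=10∧c=15 ∨ b=7∧c=42 := by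
          interval_cases b <;> omega
        rcases hsub with ⟨rfl,rfl⟩|⟨rfl,rfl⟩|⟨rfl,rfl⟩|⟨rfl,rfl⟩|⟨rfl,rfl⟩
        · exact Or.inr (Or.inr (Or.inr (Or.inr (Or.inr (Or.inr (Or.inr (Or.inl rfl)))))))
        · exact Or.inr (Or.inr (Or.inr (Or.inr (Or.inr (Or.inr (Or.inr (Or.inr (Or.inr (Or.inr (Or.inr (Or.inr (Or.inl rfl))))))))))))
        · exact Or.inr (Or.inr (Or.inr (Or.inr (Or.inr (Or.inr (Or.inr (Or.inr (Or.inr (Or.inr (Or.inr (Or.inr (Or.inr (Or.inl rfl)))))))))))))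
        · exact Or.inr (Or.inr (Or.inr (Or.inr (Or.inr (Or.inr (Or.inr (Or.inr (Or.inr (Or.inr (Or.inr (Or.inr (Or.inr (Or.inr (Or.inl rfl))))))))))))))
        · exact Or.inr (Or.inr (Or.inr (Or.inr (Or.inr (Or.inr (Or.inr (Or.inr (Or.inr (Or.inr (Or.inr (Or.inr (Or.inr (Or.inr (Or.inr (Or.inr rfl)))))))))))))))
      · have hb8 : b ≤ 8 := by
          by_contra hcon
          have := Nat.mul_le_mul_right c (show 9 ≤ b by omega)
          linarith
        have hsub : b=8∧c=8 ∨ b=6∧c=12 ∨ b=5∧c=20 := by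
          interval_cases b <;> omega
        rcases hsub with ⟨rfl,rfl⟩|⟨rfl,rfl⟩|⟨rfl,rfl⟩
        · exact Or.inr (Or.inr (Or.inr (Or.inr (Or.inr (Or.inr (Or.inr (Or.inr (Or.inl rfl))))))))
        · exact Or.inr (Or.inr (Or.inr (Or.inr (Or.inr (Or.inr (Or.inr (Or.inr (Or.inr (Or.inl rfl)))))))))
        · exact Or.inr (Or.inr (Or.inr (Or.inr (Or.inr (Or.inr (Or.inr (Or.inr (Or.inr (Or.inr (Or.inr (Or.inr (Or.inr (Or.inr (Or.inr (Or.inl rfl)))))))))))))))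
      · have hb6 : b ≤ 6 := by
          by_contra hcon
          have := Nat.mul_le_mul_right c (show 7 ≤ b by omega)
          linarith
        have hsub : b=5∧c=10 := by
          interval_cases b <;> omega
        obtain ⟨rfl,rfl⟩ := hsub
        exact Or.inr (Or.inr (Or.inr (Or.inr (Or.inr (Or.inr (Or.inr (Or.inr (Or.inr (Or.inr (Or.inr (Or.inl rfl)))))))))))
      · have hb6 : b ≤ 6 := by
          by_contra hcon
          have := Nat.mul_le_mul_right c (show 7 ≤ b by omega)
          linarith
        have hsub : b=6∧c=6 := by
          interval_cases b <;> omega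
        obtain ⟨rfl,rfl⟩ := hsub
        exact Or.inr (Or.inr (Or.inr (Or.inr (Or.inr (Or.inr (Or.inr (Or.inr (Or.inr (Or.inr (Or.inl rfl))))))))))
    -- length 4
    · simp only [List.pairwise_cons, List.mem_cons, List.not_mem_nil, or_false,
        List.mem_singleton, forall_eq_or_imp, forall_eq, List.Pairwise.nil, and_true] at hsort
      obtain ⟨⟨hab, -, -⟩, ⟨hbc, -⟩, hcd, -⟩ := hsort
      have ha := h3' a (by simp)
      simp only [List.map_cons, List.map_nil, List.sum_cons, List.sum_nil, add_zero] at hsum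
      have ha0 : (a:ℚ) ≠ 0 := Nat.cast_ne_zero.mpr (by omega)
      have hb0 : (b:ℚ) ≠ 0 := Nat.cast_ne_zero.mpr (by omega)
      have hc0 : (c:ℚ) ≠ 0 := Nat.cast_ne_zero.mpr (by omega)
      have hd0 : (d:ℚ) ≠ 0 := Nat.cast_ne_zero.mpr (by omega)
      have key : b*c*d + a*c*d + a*b*d + a*b*c = a*b*c*d := by
        have hq : (b:ℚ)*c*d + a*c*d + a*b*d + a*b*c = a*b*c*d := by
          field_simp at hsum; linarith
        exact_mod_cast hq
      have hb4 : b ≤ 4 := by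
        by_contra hcon
        have l1 := term_mono 3 a (by norm_num) (by omega)
        have l2 := term_mono 5 b (by norm_num) (by omega)
        have l3 := term_mono 5 c (by norm_num) (by omega)
        have l4 := term_mono 5 d (by norm_num) (by omega)
        norm_num [one_div] at l1 l2 l3 l4 hsum
        linarith
      have hc6 : c ≤ 6 := by
        by_contra hcon
        have l1 := term_mono 3 a (by norm_num) (by omega)
        have l2 := term_mono 3 b (by norm_num) (by omega)
        have l3 := term_mono 7 c (by norm_num) (by omega)
        have l4 := term_mono 7 d (by norm_num) (by omega)
        norm_num [one_div] at l1 l2 l3 l4 hsum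
        linarith
      have ha4 : a ≤ 4 := by omega
      have hsub : a=3∧b=3∧c=4∧d=12 ∨ a=3∧b=3∧c=6∧d=6 ∨ a=3∧b=4∧c=4∧d=6 ∨ a=4∧b=4∧c=4∧d=4 := by
        interval_cases a <;> interval_cases b <;> interval_cases c <;> omega
      rcases hsub with ⟨rfl,rfl,rfl,rfl⟩|⟨rfl,rfl,rfl,rfl⟩|⟨rfl,rfl,rfl,rfl⟩|⟨rfl,rfl,rfl,rfl⟩
      · exact Or.inr (Or.inr (Or.inr (Or.inl rfl)))
      · exact Or.inr (Or.inr (Or.inr (Or.inr (Or.inl rfl))))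
      · exact Or.inr (Or.inr (Or.inr (Or.inr (Or.inr (Or.inl rfl)))))
      · exact Or.inr (Or.inr (Or.inr (Or.inr (Or.inr (Or.inr (Or.inl rfl))))))
    -- length 5
    · simp only [List.pairwise_cons, List.mem_cons, List.not_mem_nil, or_false,
        List.mem_singleton, forall_eq_or_imp, forall_eq, List.Pairwise.nil, and_true] at hsort
      obtain ⟨⟨hab, -, -, -⟩, ⟨hbc, -, -⟩, ⟨hcd, -⟩, hde, -⟩ := hsort
      have ha := h3' a (by simp)
      simp only [List.map_cons, List.map_nil, List.sum_cons, List.sum_nil, add_zero] at hsum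
      have hc3 : c ≤ 3 := by
        by_contra hcon
        have l1 := term_mono 3 a (by norm_num) (by omega)
        have l2 := term_mono 3 b (by norm_num) (by omega)
        have l3 := term_mono 4 c (by norm_num) (by omega)
        have l4 := term_mono 4 d (by norm_num) (by omega)
        have l5 := term_mono 4 e (by norm_num) (by omega)
        norm_num [one_div] at l1 l2 l3 l4 l5 hsum
        linarith
      have ha3 : a = 3 := by omega
      have hb3 : b = 3 := by omega
      have hc3' : c = 3 := by omega
      subst ha3; subst hb3; subst hc3'
      have hd4 : d ≤ 4 := by
        by_contra hcon
        have l4 := term_mono 5 d (by norm_num) (by omega)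
        have l5 := term_mono 5 e (by norm_num) (by omega)
        norm_num [one_div] at l4 l5 hsum
        linarith
      have he6 : e ≤ 6 := by
        by_contra hcon
        have l4 := term_mono 3 d (by norm_num) (by omega)
        have l5 := term_mono 7 e (by norm_num) (by omega)
        norm_num [one_div] at l4 l5 hsum
        linarith
      have hd0 : (d:ℚ) ≠ 0 := Nat.cast_ne_zero.mpr (by omega)
      have he0 : (e:ℚ) ≠ 0 := Nat.cast_ne_zero.mpr (by omega)
      have key : 2*(d+e) = d*e := by
        have hq : 2*((d:ℚ)+e) = d*e := by
          norm_num at hsum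
          field_simp at hsum
          linarith
        exact_mod_cast hq
      have hsub : d=3∧e=6 ∨ d=4∧e=4 := by
        interval_cases d <;> interval_cases e <;> omega
      rcases hsub with ⟨rfl,rfl⟩|⟨rfl,rfl⟩
      · exact Or.inr (Or.inr (Or.inl rfl))
      · exact Or.inr (Or.inl rfl)
    -- length 6
    · simp only [List.pairwise_cons, List.mem_cons, List.not_mem_nil, or_false,
        List.mem_singleton, forall_eq_or_imp, forall_eq, List.Pairwise.nil, and_true] at hsort
      obtain ⟨⟨hab, -, -, -, -⟩, ⟨hbc, -, -, -⟩, ⟨hcd, -, -⟩, ⟨hde, -⟩, heg, -⟩ := hsort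
      have ha := h3' a (by simp)
      simp only [List.map_cons, List.map_nil, List.sum_cons, List.sum_nil, add_zero] at hsum
      have hg3 : g ≤ 3 := by
        by_contra hcon
        have l1 := term_mono 3 a (by norm_num) (by omega)
        have l2 := term_mono 3 b (by norm_num) (by omega)
        have l3 := term_mono 3 c (by norm_num) (by omega)
        have l4 := term_mono 3 d (by norm_num) (by omega)
        have l5 := term_mono 3 e (by norm_num) (by omega)
        have l6 := term_mono 4 g (by norm_num) (by omega)
        norm_num [one_div] at l1 l2 l3 l4 l5 l6 hsum
        linarith
      have : a = 3 ∧ b = 3 ∧ c = 3 ∧ d = 3 ∧ e = 3 ∧ g = 3 := by omega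
      obtain ⟨rfl,rfl,rfl,rfl,rfl,rfl⟩ := this
      exact Or.inl rfl
    -- length ≥ 7
    · simp only [List.length_cons] at hlen
      omega
  · intro h
    rcases h with h|h|h|h|h|h|h|h|h|h|h|h|h|h|h|h|h <;>
      rw [sum_conv, h] <;> norm_num [Multiset.insert_eq_cons]
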